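/- Let q > 3 be a prime, χ a nontrivial Dirichlet character modulo q, and m, r_1, r_2, α, γ integers with gcd(αγ, q) = 1 and gcd(r_1·r_2, q) = 1. If q divides m, then 𝔠 = χ(α·γ̄)·R_q(r_2 − r_1·α·γ̄) − χ(r_2·r̄_1), where γ̄ and r̄_1 denote multiplicative inverses modulo q and R_q(a) = Σ_{z ∈ 𝔽_q^×} e(az/q) is the Ramanujan sum (so R_q(a) = q−1 if q | a and R_q(a) = −1 otherwise). -/

import Mathlib

open Complex

/-- The complete character sum
`𝔠 = Σ_{z ∈ 𝔽_q^×, m + γ z̄ ≠ 0} χ̄(r₁ + z) χ(r₂ + α (m + γ z̄)⁻¹)`,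
all arithmetic in `𝔽_q = ZMod q` (the sum over `𝔽_q^×` is realized as a sum over
residues `z ∈ {0,…,q−1}` with `z ≠ 0` in `ZMod q`). -/
noncomputable def frakC (q : ℕ) (χ : DirichletCharacter ℂ q) (m r1 r2 α γ : ℤ) : ℂ :=
  ∑ z ∈ (Finset.range q).filter
      (fun z : ℕ => (z : ZMod q) ≠ 0 ∧ (m : ZMod q) + (γ : ZMod q) * (z : ZMod q)⁻¹ ≠ 0),
    (starRingEnd ℂ) (χ ((r1 : ZMod q) + (z : ZMod q))) *
      χ ((r2 : ZMod q) + (α : ZMod q) * ((m : ZMod q) + (γ : ZMod q) * (z : ZMod q)⁻¹)⁻¹)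

/-- The Ramanujan sum `R_q(a)` for `q` prime: `q−1` if `a = 0` in `𝔽_q`, and `−1` otherwise. -/
noncomputable def ramanujanRq (q : ℕ) (a : ZMod q) : ℂ :=
  if a = 0 then (q : ℂ) - 1 else -1

-- helper: sum over range q of a function of the residue equals sum over ZMod q
lemma sum_range_zmod (q : ℕ) [NeZero q] (g : ZMod q → ℂ) :
    ∑ z ∈ Finset.range q, g (z : ZMod q) = ∑ z : ZMod q, g z := by
  refine Finset.sum_nbij' (fun i => (i : ZMod q)) (fun z => z.val) ?_ ?_ ?_ ?_ ?_
  · intro a _; exact Finset.mem_univ _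
  · intro a _; exact Finset.mem_range.2 (ZMod.val_lt a)
  · intro a ha; exact ZMod.val_natCast_of_lt (Finset.mem_range.1 ha)
  · intro a _; exact ZMod.natCast_rightInverse a
  · intro a _; rfl

theorem stmt_8 (q : ℕ) (hq : q.Prime) (hq3 : 3 < q)
    (χ : DirichletCharacter ℂ q) (hχ : χ ≠ 1)
    (m r1 r2 α γ : ℤ) (hαγ : Int.gcd (α * γ) q = 1) (hr : Int.gcd (r1 * r2) q = 1)
    (hm : (q : ℤ) ∣ m) :
    frakC q χ m r1 r2 α γ =
      χ ((α : ZMod q) * (γ : ZMod q)⁻¹) *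
          ramanujanRq q ((r2 : ZMod q) - (r1 : ZMod q) * (α : ZMod q) * (γ : ZMod q)⁻¹) -
        χ ((r2 : ZMod q) * (r1 : ZMod q)⁻¹) := by
  haveI : Fact q.Prime := ⟨hq⟩
  have hm0 : (m : ZMod q) = 0 := (ZMod.intCast_zmod_eq_zero_iff_dvd m q).2 hm
  -- nonvanishing of the parameters mod q
  have hdvd : ∀ {a b : ℤ}, Int.gcd (a * b) q = 1 → (a : ZMod q) ≠ 0 ∧ (b : ZMod q) ≠ 0 := by
    intro a b h
    have hab : ¬ (q : ℤ) ∣ a * b := by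
      intro hd
      have := Int.dvd_coe_gcd hd dvd_rfl
      rw [h, Nat.cast_one] at this
      exact hq.one_lt.ne' (by exact_mod_cast Int.eq_one_of_dvd_one (by positivity) this)
    constructor
    · intro h0
      exact hab (Dvd.dvd.mul_right ((ZMod.intCast_zmod_eq_zero_iff_dvd a q).1 h0) b)
    · intro h0
      exact hab (Dvd.dvd.mul_left ((ZMod.intCast_zmod_eq_zero_iff_dvd b q).1 h0) a)
  obtain ⟨hα, hγ⟩ := hdvd hαγ
  obtain ⟨hr1, hr2⟩ := hdvd hr
  -- conjugation of character values
  have hconj : ∀ a : ZMod q, (starRingEnd ℂ) (χ a) = χ a⁻¹ := by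
    intro a
    rw [starRingEnd_apply, MulChar.star_apply' χ a, MulChar.inv_apply' χ a]
  set β : ZMod q := (α : ZMod q) * (γ : ZMod q)⁻¹ with hβ
  have hβ0 : β ≠ 0 := mul_ne_zero hα (inv_ne_zero hγ)
  -- rewrite frakC as a sum over ZMod q
  have h1 : frakC q χ m r1 r2 α γ =
      ∑ z ∈ Finset.univ.filter (fun z : ZMod q => z ≠ 0),
        χ ((r1 + z)⁻¹) * χ (r2 + β * z) := by
    rw [frakC]
    rw [Finset.sum_filter]
    rw [sum_range_zmod q (fun z : ZMod q =>
      if z ≠ 0 ∧ (m : ZMod q) + (γ : ZMod q) * z⁻¹ ≠ 0 then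
        (starRingEnd ℂ) (χ ((r1 : ZMod q) + z)) *
          χ ((r2 : ZMod q) + (α : ZMod q) * ((m : ZMod q) + (γ : ZMod q) * z⁻¹)⁻¹)
      else 0)]
    rw [← Finset.sum_filter]
    refine Finset.sum_congr ?_ ?_
    · ext z
      simp only [Finset.mem_filter, Finset.mem_univ, true_and, hm0, zero_add]
      constructor
      · rintro ⟨h, _⟩; exact h
      · intro h; exact ⟨h, mul_ne_zero hγ (inv_ne_zero h)⟩
    · intro z hz
      have hz0 : z ≠ 0 := (Finset.mem_filter.1 hz).2
      rw [hm0, zero_add, hconj, mul_inv, inv_inv]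
      rw [hβ]; ring_nf
  rw [h1]
  set d : ZMod q := (r2 : ZMod q) - β * r1 with hd
  have hdarg : (r2 : ZMod q) - (r1 : ZMod q) * (α : ZMod q) * (γ : ZMod q)⁻¹ = d := by
    rw [hd, hβ]; ring
  rw [hdarg]
  set f : ZMod q → ℂ := fun z => χ ((r1 + z)⁻¹) * χ (r2 + β * z) with hf
  have hsplit : ∑ z ∈ Finset.univ.filter (fun z : ZMod q => z ≠ 0), f z
      = (∑ z : ZMod q, f z) - f 0 := by
    rw [Finset.filter_ne', Finset.sum_erase_eq_sub (Finset.mem_univ (0 : ZMod q))]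
  have hf0 : f 0 = χ ((r2 : ZMod q) * (r1 : ZMod q)⁻¹) := by
    rw [hf]
    simp only [add_zero, mul_zero, ← map_mul]
    rw [mul_comm]
  have hT : ∑ z : ZMod q, f z = ∑ w : ZMod q, χ (w⁻¹) * χ (β * w + d) := by
    rw [← Equiv.sum_comp (Equiv.addRight (r1 : ZMod q))
      (fun w => χ (w⁻¹) * χ (β * w + d))]
    refine Finset.sum_congr rfl fun z _ => ?_
    simp only [Equiv.coe_addRight, hf, hd]
    have e1 : z + (r1 : ZMod q) = r1 + z := add_comm _ _
    rw [e1]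
    congr 1
    ring
  rw [hsplit, hf0, hT]
  congr 1
  -- now: ∑ w, χ (w⁻¹) * χ (β * w + d) = χ β * ramanujanRq q d
  by_cases hd0 : d = 0
  · rw [hd0, ramanujanRq, if_pos rfl]
    have : ∀ w : ZMod q, χ (w⁻¹) * χ (β * w + 0) = if w = 0 then 0 else χ β := by
      intro w
      by_cases hw : w = 0
      · simp [hw, MulChar.map_zero]
      · rw [if_neg hw, add_zero, ← map_mul, mul_comm β w, ← mul_assoc,
          inv_mul_cancel₀ hw, one_mul]
    rw [Finset.sum_congr rfl fun w _ => this w]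
    rw [Finset.sum_ite, Finset.sum_const_zero, zero_add, Finset.sum_const]
    have hset : (Finset.univ.filter (fun w : ZMod q => ¬ w = 0)) = Finset.univ.erase 0 := by
      ext w; simp
    rw [hset, Finset.card_erase_of_mem (Finset.mem_univ _), Finset.card_univ, ZMod.card,
      nsmul_eq_mul, Nat.cast_sub hq.one_lt.le, Nat.cast_one, mul_comm]
  · rw [ramanujanRq, if_neg hd0]
    have hz0 : χ ((0 : ZMod q)⁻¹) * χ (β * 0 + d) = 0 := by
      simp [MulChar.map_zero]
    have herase : ∑ w ∈ Finset.univ.erase (0 : ZMod q), χ (w⁻¹) * χ (β * w + d)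
        = ∑ w : ZMod q, χ (w⁻¹) * χ (β * w + d) := by
      rw [Finset.sum_erase_eq_sub (Finset.mem_univ (0 : ZMod q)), hz0, sub_zero]
    rw [← herase]
    have step1 : ∀ w ∈ Finset.univ.erase (0 : ZMod q),
        χ (w⁻¹) * χ (β * w + d) = χ (β + d * w⁻¹) := by
      intro w hw
      have hw0 : w ≠ 0 := (Finset.mem_erase.1 hw).1
      rw [← map_mul]
      congr 1
      field_simp
    rw [Finset.sum_congr rfl step1]
    have step2 : ∑ w ∈ Finset.univ.erase (0 : ZMod q), χ (β + d * w⁻¹)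
        = ∑ u ∈ Finset.univ.erase (0 : ZMod q), χ (β + u) := by
      refine Finset.sum_nbij' (fun w => d * w⁻¹) (fun u => d * u⁻¹) ?_ ?_ ?_ ?_ ?_
      · intro a ha
        have ha0 : a ≠ 0 := (Finset.mem_erase.1 ha).1
        exact Finset.mem_erase.2 ⟨mul_ne_zero hd0 (inv_ne_zero ha0), Finset.mem_univ _⟩
      · intro a ha
        have ha0 : a ≠ 0 := (Finset.mem_erase.1 ha).1
        exact Finset.mem_erase.2 ⟨mul_ne_zero hd0 (inv_ne_zero ha0), Finset.mem_univ _⟩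
      · intro a ha
        have ha0 : a ≠ 0 := (Finset.mem_erase.1 ha).1
        field_simp
      · intro a ha
        have ha0 : a ≠ 0 := (Finset.mem_erase.1 ha).1
        field_simp
      · intro a _; rfl
    rw [step2, Finset.sum_erase_eq_sub (Finset.mem_univ (0 : ZMod q)), add_zero]
    have step3 : ∑ u : ZMod q, χ (β + u) = ∑ t : ZMod q, χ t := by
      exact Equiv.sum_comp (Equiv.addLeft β) (fun t => χ t)
    rw [step3, MulChar.sum_eq_zero_of_ne_one hχ]
    ring
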